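/- If S is the numerical semigroup generated by two coprime integers p and q with 1 < p < q, then the largest integer not belonging to S is (p-1)(q-1)-1. -/
import Mathlib

theorem largest_gap_of_two_generated_semigroup
    (p q : ℕ) (hp : 1 < p) (hpq : p < q) (hcop : Nat.Coprime p q) :
    IsGreatest {n : ℕ | ¬ ∃ a b : ℕ, n = a * p + b * q} ((p - 1) * (q - 1) - 1) := by
  have hq : 1 < q := hp.trans hpq
  have h := frobeniusNumber_pair hcop hp hq
  simp_rw [FrobeniusNumber, AddSubmonoid.mem_closure_pair, smul_eq_mul] at h
  have h3 : p + q ≤ p * q := Nat.add_le_mul hp hq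
  have h4 : 1 ≤ (p - 1) * (q - 1) :=
    Nat.one_le_iff_ne_zero.mpr (Nat.mul_ne_zero (by omega) (by omega))
  have hnum : (p - 1) * (q - 1) - 1 = p * q - p - q := by
    zify [hp.le, hq.le, h3, h4, Nat.sub_sub]
    ring
  have hset : {n : ℕ | ¬ ∃ a b : ℕ, n = a * p + b * q} = {k | ¬ ∃ a b : ℕ, a * p + b * q = k} := by
    ext n; simp [eq_comm]
  rw [hnum, hset]
  exact h
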